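/- arXiv:1105.4563 — 3 statements merged into one kernel-verified Lean document; each statement's English description precedes it below -/
import Mathlib

section
/- Let X_1,...,X_T be real random variables, γ̂_k = T^{-1} Σ_{t=|k|+1}^{T} X_{t-|k|} X_t for |k| < T, Σ̂_T = (γ̂_{s-t})_{1≤s,t≤T} the sample covariance matrix, and I_T(θ) = T^{-1} |Σ_{t=1}^T X_t e^{itθ}|² the periodogram. Then the operator norm (spectral radius) of Σ̂_T satisfies λ(Σ̂_T) ≤ max_{-π≤θ≤π} I_T(θ) (pointwise, for every realization). -/
open MeasureTheory Real Finset

noncomputable section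

-- integral of cos(k θ) over -π..π
lemma intJ (k : ℤ) : ∫ θ in (-π)..π, Real.cos (k * θ) = if k = 0 then 2 * π else 0 := by
  rcases eq_or_ne k 0 with h | h
  · simp [h, two_mul]
  · have hk : (k:ℝ) ≠ 0 := Int.cast_ne_zero.mpr h
    have := intervalIntegral.integral_comp_mul_left (a := -π) (b := π) (c := (k:ℝ))
      (f := Real.cos) hk
    rw [this, integral_cos]
    have h1 : Real.sin ((k:ℝ) * π) = 0 := Real.sin_int_mul_pi k
    have h2 : Real.sin ((k:ℝ) * -π) = 0 := by
      rw [mul_neg, Real.sin_neg, h1, neg_zero]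
    simp [h1, h2, if_neg h]

lemma intCC (m n : ℤ) : ∫ θ in (-π)..π, Real.cos (m * θ) * Real.cos (n * θ)
    = ((if m - n = 0 then 2*π else 0) + (if m + n = 0 then 2*π else 0)) / 2 := by
  have key : ∀ θ : ℝ, Real.cos (m * θ) * Real.cos (n * θ)
      = (Real.cos (((m - n : ℤ)) * θ) + Real.cos (((m + n : ℤ)) * θ)) / 2 := by
    intro θ
    push_cast
    rw [sub_mul, add_mul, Real.cos_sub, Real.cos_add]
    ring
  simp_rw [key]
  rw [intervalIntegral.integral_div]
  rw [intervalIntegral.integral_add ((by fun_prop : Continuous fun θ:ℝ => Real.cos ((m-n:ℤ)*θ)).intervalIntegrable _ _) ((by fun_prop : Continuous fun θ:ℝ => Real.cos ((m+n:ℤ)*θ)).intervalIntegrable _ _)]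
  rw [intJ, intJ]

-- generic product-to-double-sum identity
lemma prodCS {ι : Type*} (s : Finset ι) (a b : ι → ℝ) (w : ι → ℤ) (θ : ℝ) :
    (∑ i ∈ s, a i * Real.cos (w i * θ)) * (∑ i ∈ s, b i * Real.cos (w i * θ))
      + (∑ i ∈ s, a i * Real.sin (w i * θ)) * (∑ i ∈ s, b i * Real.sin (w i * θ))
    = ∑ i ∈ s, ∑ j ∈ s, a i * b j * Real.cos ((w i - w j : ℤ) * θ) := by
  rw [Finset.sum_mul_sum, Finset.sum_mul_sum, ← Finset.sum_add_distrib]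
  refine Finset.sum_congr rfl fun i _ => ?_
  rw [← Finset.sum_add_distrib]
  refine Finset.sum_congr rfl fun j _ => ?_
  push_cast
  rw [sub_mul, Real.cos_sub]
  ring

-- periodogram expansion
lemma periodogram_cs (T : ℕ) (X : ℕ → ℝ) (I : ℝ → ℝ)
    (hI : ∀ θ : ℝ, I θ = (T : ℝ)⁻¹ *
      ‖∑ t ∈ Finset.Icc 1 T,
        (X t : ℂ) * Complex.exp (Complex.I * (t : ℂ) * (θ : ℂ))‖ ^ 2) (θ : ℝ) :
    I θ = (T : ℝ)⁻¹ * ((∑ t ∈ Finset.Icc 1 T, X t * Real.cos ((t : ℤ) * θ)) ^ 2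
      + (∑ t ∈ Finset.Icc 1 T, X t * Real.sin ((t : ℤ) * θ)) ^ 2) := by
  rw [hI]
  congr 1
  have : (∑ t ∈ Finset.Icc 1 T, (X t : ℂ) * Complex.exp (Complex.I * (t : ℂ) * (θ : ℂ)))
      = ((∑ t ∈ Finset.Icc 1 T, X t * Real.cos ((t:ℤ) * θ) : ℝ) : ℂ)
        + ((∑ t ∈ Finset.Icc 1 T, X t * Real.sin ((t:ℤ) * θ) : ℝ) : ℂ) * Complex.I := by
    push_cast
    rw [Finset.sum_mul, ← Finset.sum_add_distrib]
    refine Finset.sum_congr rfl fun t _ => ?_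
    have : Complex.I * (t : ℂ) * (θ : ℂ) = ((t * θ : ℝ) : ℂ) * Complex.I := by push_cast; ring
    rw [this, Complex.exp_mul_I]
    push_cast
    ring
  rw [this, Complex.sq_norm, Complex.normSq_add_mul_I]

lemma sumD (T m : ℕ) (X : ℕ → ℝ) :
    ∑ u ∈ Finset.Icc 1 T, ∑ v ∈ Finset.Icc 1 T,
      (if (u:ℤ) - (v:ℤ) = (m:ℤ) then X u * X v else 0)
    = ∑ t ∈ Finset.Icc (m+1) T, X (t - m) * X t := by
  have step : ∀ u ∈ Finset.Icc 1 T,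
      (∑ v ∈ Finset.Icc 1 T, (if (u:ℤ) - (v:ℤ) = (m:ℤ) then X u * X v else 0))
      = (if u ∈ Finset.Icc (m+1) T then X (u - m) * X u else 0) := by
    intro u hu
    simp only [Finset.mem_Icc] at hu
    by_cases hum : m + 1 ≤ u
    · have hcong : ∀ v ∈ Finset.Icc 1 T,
          (if (u:ℤ) - (v:ℤ) = (m:ℤ) then X u * X v else 0)
          = (if v = u - m then X u * X v else 0) := by
        intro v hv
        simp only [Finset.mem_Icc] at hv
        refine if_congr ?_ rfl rfl
        omega
      rw [Finset.sum_congr rfl hcong, Finset.sum_ite_eq' (Finset.Icc 1 T) (u - m)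
        (fun v => X u * X v)]
      have h1 : u - m ∈ Finset.Icc 1 T := by simp only [Finset.mem_Icc]; omega
      have h2 : u ∈ Finset.Icc (m+1) T := by simp only [Finset.mem_Icc]; omega
      rw [if_pos h1, if_pos h2, mul_comm]
    · have hcong : ∀ v ∈ Finset.Icc 1 T,
          (if (u:ℤ) - (v:ℤ) = (m:ℤ) then X u * X v else 0) = 0 := by
        intro v hv
        simp only [Finset.mem_Icc] at hv
        rw [if_neg]
        omega
      rw [Finset.sum_congr rfl hcong, Finset.sum_const_zero, if_neg]
      simp only [Finset.mem_Icc]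
      omega
  rw [Finset.sum_congr rfl step, Finset.sum_ite_mem]
  congr 1
  ext i
  simp only [Finset.mem_inter, Finset.mem_Icc]
  omega

lemma sumD' (T m : ℕ) (X : ℕ → ℝ) :
    ∑ u ∈ Finset.Icc 1 T, ∑ v ∈ Finset.Icc 1 T,
      (if (u:ℤ) - (v:ℤ) = -(m:ℤ) then X u * X v else 0)
    = ∑ t ∈ Finset.Icc (m+1) T, X (t - m) * X t := by
  rw [Finset.sum_comm, ← sumD T m X]
  refine Finset.sum_congr rfl fun a _ => Finset.sum_congr rfl fun b _ => ?_
  refine if_congr (by omega) (mul_comm _ _) rfl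

lemma sumDk (T : ℕ) (X : ℕ → ℝ) (k : ℤ) :
    ∑ u ∈ Finset.Icc 1 T, ∑ v ∈ Finset.Icc 1 T,
      (if (u:ℤ) - (v:ℤ) = k then X u * X v else 0)
    = ∑ t ∈ Finset.Icc (k.natAbs+1) T, X (t - k.natAbs) * X t := by
  obtain ⟨m, rfl | rfl⟩ : ∃ m : ℕ, k = (m : ℤ) ∨ k = -(m : ℤ) := ⟨k.natAbs, Int.natAbs_eq k⟩
  · simpa using sumD T m X
  · simpa using sumD' T m X

lemma intIcos (T : ℕ) (X : ℕ → ℝ) (I : ℝ → ℝ)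
    (hIdd : ∀ θ : ℝ, I θ = (T : ℝ)⁻¹ * ∑ u ∈ Finset.Icc 1 T, ∑ v ∈ Finset.Icc 1 T,
      X u * X v * Real.cos ((((u:ℤ) - (v:ℤ) : ℤ)) * θ)) (k : ℤ) :
    (2*π)⁻¹ * ∫ θ in (-π)..π, I θ * Real.cos (k * θ)
    = (T : ℝ)⁻¹ * ∑ t ∈ Finset.Icc (k.natAbs+1) T, X (t - k.natAbs) * X t := by
  have hint : ∀ θ : ℝ, I θ * Real.cos (k * θ)
      = (T : ℝ)⁻¹ * ∑ u ∈ Finset.Icc 1 T, ∑ v ∈ Finset.Icc 1 T,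
        X u * X v * (Real.cos ((((u:ℤ) - (v:ℤ) : ℤ)) * θ) * Real.cos (k * θ)) := by
    intro θ
    rw [hIdd θ, mul_assoc]
    congr 1
    rw [Finset.sum_mul]
    refine Finset.sum_congr rfl fun u _ => ?_
    rw [Finset.sum_mul]
    refine Finset.sum_congr rfl fun v _ => ?_
    ring
  simp_rw [hint]
  rw [intervalIntegral.integral_const_mul]
  rw [intervalIntegral.integral_finset_sum (fun u _ =>
    ((continuous_finset_sum _ fun v _ => (by fun_prop : Continuous fun θ:ℝ => X u * X v *
      (Real.cos ((((u:ℤ) - (v:ℤ) : ℤ)) * θ) * Real.cos (k * θ)))).intervalIntegrable _ _))]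
  have inner : ∀ u ∈ Finset.Icc 1 T, (∫ θ in (-π)..π, ∑ v ∈ Finset.Icc 1 T,
      X u * X v * (Real.cos ((((u:ℤ) - (v:ℤ) : ℤ)) * θ) * Real.cos (k * θ)))
      = ∑ v ∈ Finset.Icc 1 T, ((2*π) * (if (u:ℤ) - (v:ℤ) = k then X u * X v else 0)
        + (2*π) * (if (u:ℤ) - (v:ℤ) = -k then X u * X v else 0)) / 2 := by
    intro u _
    rw [intervalIntegral.integral_finset_sum (fun v _ =>
      ((by fun_prop : Continuous fun θ:ℝ => X u * X v *
      (Real.cos ((((u:ℤ) - (v:ℤ) : ℤ)) * θ) * Real.cos (k * θ))).intervalIntegrable _ _))]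
    refine Finset.sum_congr rfl fun v _ => ?_
    rw [intervalIntegral.integral_const_mul, intCC]
    rcases eq_or_ne ((u:ℤ) - (v:ℤ)) k with h | h
    · rcases eq_or_ne ((u:ℤ) - (v:ℤ)) (-k) with h' | h'
      · rw [if_pos (by omega), if_pos (by omega), if_pos h, if_pos h']; ring
      · rw [if_pos (by omega), if_neg (by omega), if_pos h, if_neg h']; ring
    · rcases eq_or_ne ((u:ℤ) - (v:ℤ)) (-k) with h' | h'
      · rw [if_neg (by omega), if_pos (by omega), if_neg h, if_pos h']; ring
      · rw [if_neg (by omega), if_neg (by omega), if_neg h, if_neg h']; ring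
  rw [Finset.sum_congr rfl inner]
  have expand : ∑ u ∈ Finset.Icc 1 T, ∑ v ∈ Finset.Icc 1 T,
      ((2*π) * (if (u:ℤ) - (v:ℤ) = k then X u * X v else 0)
        + (2*π) * (if (u:ℤ) - (v:ℤ) = -k then X u * X v else 0)) / 2
      = (2*π) * ∑ t ∈ Finset.Icc (k.natAbs+1) T, X (t - k.natAbs) * X t := by
    have : ∀ u ∈ Finset.Icc 1 T, ∑ v ∈ Finset.Icc 1 T,
        ((2*π) * (if (u:ℤ) - (v:ℤ) = k then X u * X v else 0)
        + (2*π) * (if (u:ℤ) - (v:ℤ) = -k then X u * X v else 0)) / 2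
        = π * ((∑ v ∈ Finset.Icc 1 T, (if (u:ℤ) - (v:ℤ) = k then X u * X v else 0))
          + ∑ v ∈ Finset.Icc 1 T, (if (u:ℤ) - (v:ℤ) = -k then X u * X v else 0)) := by
      intro u _
      rw [mul_add, Finset.mul_sum, Finset.mul_sum, ← Finset.sum_add_distrib]
      refine Finset.sum_congr rfl fun v _ => ?_
      ring
    rw [Finset.sum_congr rfl this, ← Finset.mul_sum, Finset.sum_add_distrib,
      sumDk T X k, sumDk T X (-k), Int.natAbs_neg]
    ring
  rw [expand]
  have hπ : (2*π) ≠ 0 := by positivity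
  field_simp

lemma parseval (T : ℕ) (x : Fin T → ℝ) :
    (∫ θ in (-π)..π, ((∑ t : Fin T, x t * Real.cos ((t:ℤ) * θ)) ^ 2
      + (∑ t : Fin T, x t * Real.sin ((t:ℤ) * θ)) ^ 2))
    = 2 * π * ∑ t, x t ^ 2 := by
  have keyf : ∀ θ : ℝ, (∑ t : Fin T, x t * Real.cos ((t:ℤ) * θ)) ^ 2
      + (∑ t : Fin T, x t * Real.sin ((t:ℤ) * θ)) ^ 2
      = ∑ i : Fin T, ∑ j : Fin T, x i * x j * Real.cos ((((i:ℤ) - (j:ℤ) : ℤ)) * θ) := by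
    intro θ
    rw [sq, sq]
    exact prodCS Finset.univ x x (fun t : Fin T => (t:ℤ)) θ
  simp_rw [keyf]
  rw [intervalIntegral.integral_finset_sum (fun i _ =>
    ((continuous_finset_sum _ fun j _ => (by fun_prop : Continuous fun θ:ℝ =>
      x i * x j * Real.cos ((((i:ℤ) - (j:ℤ) : ℤ)) * θ))).intervalIntegrable _ _))]
  have inner : ∀ i : Fin T, (∫ θ in (-π)..π, ∑ j : Fin T,
      x i * x j * Real.cos ((((i:ℤ) - (j:ℤ) : ℤ)) * θ)) = 2 * π * x i ^ 2 := by
    intro i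
    rw [intervalIntegral.integral_finset_sum (fun j _ =>
      ((by fun_prop : Continuous fun θ:ℝ =>
        x i * x j * Real.cos ((((i:ℤ) - (j:ℤ) : ℤ)) * θ)).intervalIntegrable _ _))]
    have term : ∀ j : Fin T, (∫ θ in (-π)..π,
        x i * x j * Real.cos ((((i:ℤ) - (j:ℤ) : ℤ)) * θ))
        = if j = i then 2 * π * (x i * x j) else 0 := by
      intro j
      rw [intervalIntegral.integral_const_mul, intJ]
      by_cases h : j = i
      · subst h; simp; ring
      · have hij : ¬((i:ℤ) - (j:ℤ) = 0) := by
          rw [sub_eq_zero]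
          intro hc
          exact h (Fin.ext (by exact_mod_cast hc.symm))
        rw [if_neg hij, if_neg h, mul_zero]
    simp_rw [term]
    rw [Finset.sum_ite_eq' Finset.univ i (fun j => 2 * π * (x i * x j)),
      if_pos (Finset.mem_univ i), sq]
  simp_rw [inner]
  rw [← Finset.mul_sum]


/-- Operator norm (spectral radius) `λ(A) = max_{|x|=1} |A x|` of a real matrix. -/
def opNorm {T : ℕ} (A : Matrix (Fin T) (Fin T) ℝ) : ℝ :=
  sSup {r : ℝ | ∃ x : Fin T → ℝ, ∑ i, x i ^ 2 = 1 ∧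
    r = Real.sqrt (∑ i, (A.mulVec x i) ^ 2)}

/-- **The operator norm of the sample covariance matrix is bounded by the maximum
of the periodogram.**  For data `X_1, …, X_T`, with sample autocovariances
`γ̂_k = T⁻¹ Σ_{t=|k|+1}^T X_{t-|k|} X_t`, the sample covariance matrix
`Σ̂_T = (γ̂_{s-t})` and the periodogram `I_T(θ) = T⁻¹ |Σ_{t=1}^T X_t e^{itθ}|²`, we have
`λ(Σ̂_T) ≤ max_{-π ≤ θ ≤ π} I_T(θ)` pointwise (for every realization). -/
theorem statement_2
    (T : ℕ) (hT : 0 < T) (X : ℕ → ℝ)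
    (hacov : ℤ → ℝ)
    (hhacov : ∀ k : ℤ, hacov k =
      (T : ℝ)⁻¹ * ∑ t ∈ Finset.Icc (k.natAbs + 1) T, X (t - k.natAbs) * X t)
    (Shat : Matrix (Fin T) (Fin T) ℝ)
    (hShat : ∀ s t : Fin T, Shat s t = hacov ((s : ℤ) - (t : ℤ)))
    (I : ℝ → ℝ)
    (hI : ∀ θ : ℝ, I θ = (T : ℝ)⁻¹ *
      ‖∑ t ∈ Finset.Icc 1 T,
        (X t : ℂ) * Complex.exp (Complex.I * (t : ℂ) * (θ : ℂ))‖ ^ 2) :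
    opNorm Shat ≤ sSup (I '' Set.Icc (-π) π) := by
  classical
  set M := sSup (I '' Set.Icc (-π) π) with hMdef
  have hπ0 : (0:ℝ) < π := pi_pos
  have hIc : Continuous I := by
    rw [funext hI]
    exact continuous_const.mul ((continuous_norm.comp
      (continuous_finset_sum _ fun t _ => by fun_prop)).pow 2)
  have hI0 : ∀ θ, 0 ≤ I θ := fun θ => by rw [hI]; positivity
  have hBdd : BddAbove (I '' Set.Icc (-π) π) := (isCompact_Icc.image hIc).bddAbove
  have hπmem : π ∈ Set.Icc (-π) π := ⟨by linarith, le_refl _⟩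
  have hM0 : 0 ≤ M := le_trans (hI0 π) (le_csSup hBdd ⟨π, hπmem, rfl⟩)
  have hIleM : ∀ θ ∈ Set.Icc (-π) π, I θ ≤ M := fun θ hθ => le_csSup hBdd ⟨θ, hθ, rfl⟩
  -- double sum form of the periodogram
  have hIdd : ∀ θ : ℝ, I θ = (T : ℝ)⁻¹ * ∑ u ∈ Finset.Icc 1 T, ∑ v ∈ Finset.Icc 1 T,
      X u * X v * Real.cos ((((u:ℤ) - (v:ℤ) : ℤ)) * θ) := by
    intro θ
    rw [periodogram_cs T X I hI θ, sq, sq,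
      prodCS (Finset.Icc 1 T) X X (fun t : ℕ => (t:ℤ)) θ]
  have hacovI : ∀ k : ℤ, (∫ θ in (-π)..π, I θ * Real.cos (k * θ)) = 2 * π * hacov k := by
    intro k
    have h1 := intIcos T X I hIdd k
    rw [← hhacov k] at h1
    rw [← h1]
    have h2π : (2*π) ≠ 0 := by positivity
    field_simp
  -- key bilinear bound
  have key : ∀ x y : Fin T → ℝ, (∑ i, x i ^ 2) = 1 → (∑ i, y i ^ 2) = 1 →
      (∑ s, y s * Shat.mulVec x s) ≤ M := by
    intro x y hx hy
    have hg : ∀ θ : ℝ, I θ * ((∑ s : Fin T, y s * Real.cos ((s:ℤ) * θ))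
          * (∑ t : Fin T, x t * Real.cos ((t:ℤ) * θ))
        + (∑ s : Fin T, y s * Real.sin ((s:ℤ) * θ))
          * (∑ t : Fin T, x t * Real.sin ((t:ℤ) * θ)))
        = ∑ s : Fin T, ∑ t : Fin T,
          (y s * x t) * (I θ * Real.cos ((((s:ℤ) - (t:ℤ) : ℤ)) * θ)) := by
      intro θ
      rw [prodCS Finset.univ y x (fun s : Fin T => (s:ℤ)) θ, Finset.mul_sum]
      refine Finset.sum_congr rfl fun s _ => ?_
      rw [Finset.mul_sum]
      refine Finset.sum_congr rfl fun t _ => ?_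
      ring
    -- the bilinear form as an integral
    have hsum_eq : (∑ s, y s * Shat.mulVec x s)
        = (2*π)⁻¹ * ∫ θ in (-π)..π, I θ * ((∑ s : Fin T, y s * Real.cos ((s:ℤ) * θ))
          * (∑ t : Fin T, x t * Real.cos ((t:ℤ) * θ))
        + (∑ s : Fin T, y s * Real.sin ((s:ℤ) * θ))
          * (∑ t : Fin T, x t * Real.sin ((t:ℤ) * θ))) := by
      simp_rw [hg]
      rw [intervalIntegral.integral_finset_sum (fun s _ =>
        ((continuous_finset_sum _ fun t _ => (show Continuous fun θ:ℝ =>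
          (y s * x t) * (I θ * Real.cos ((((s:ℤ) - (t:ℤ) : ℤ)) * θ)) from
          continuous_const.mul (hIc.mul (by fun_prop)))).intervalIntegrable _ _))]
      have inner : ∀ s : Fin T, (∫ θ in (-π)..π, ∑ t : Fin T,
          (y s * x t) * (I θ * Real.cos ((((s:ℤ) - (t:ℤ) : ℤ)) * θ)))
          = ∑ t : Fin T, (y s * x t) * (2 * π * hacov ((s:ℤ) - (t:ℤ))) := by
        intro s
        rw [intervalIntegral.integral_finset_sum (fun t _ =>
          ((show Continuous fun θ:ℝ =>
          (y s * x t) * (I θ * Real.cos ((((s:ℤ) - (t:ℤ) : ℤ)) * θ)) from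
          continuous_const.mul (hIc.mul (by fun_prop))).intervalIntegrable _ _))]
        refine Finset.sum_congr rfl fun t _ => ?_
        rw [intervalIntegral.integral_const_mul, hacovI ((s:ℤ) - (t:ℤ))]
      simp_rw [inner]
      have h2π : (2*π) ≠ 0 := by positivity
      rw [Finset.mul_sum]
      refine Finset.sum_congr rfl fun s _ => ?_
      rw [Finset.mul_sum]
      simp only [Matrix.mulVec, dotProduct, hShat, Finset.mul_sum]
      refine Finset.sum_congr rfl fun t _ => ?_
      field_simp
    rw [hsum_eq]
    -- pointwise bound and integration
    have hmono : (∫ θ in (-π)..π, I θ * ((∑ s : Fin T, y s * Real.cos ((s:ℤ) * θ))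
          * (∑ t : Fin T, x t * Real.cos ((t:ℤ) * θ))
        + (∑ s : Fin T, y s * Real.sin ((s:ℤ) * θ))
          * (∑ t : Fin T, x t * Real.sin ((t:ℤ) * θ))))
        ≤ ∫ θ in (-π)..π, M * ((((∑ s : Fin T, y s * Real.cos ((s:ℤ) * θ)) ^ 2
            + (∑ s : Fin T, y s * Real.sin ((s:ℤ) * θ)) ^ 2)
          + ((∑ t : Fin T, x t * Real.cos ((t:ℤ) * θ)) ^ 2
            + (∑ t : Fin T, x t * Real.sin ((t:ℤ) * θ)) ^ 2)) / 2) := by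
      refine intervalIntegral.integral_mono_on (by linarith)
        ((hIc.mul (by fun_prop)).intervalIntegrable _ _)
        ((continuous_const.mul (by fun_prop)).intervalIntegrable _ _)
        (fun θ hθ => ?_)
      have h1 : I θ ≤ M := hIleM θ hθ
      have h0 : 0 ≤ I θ := hI0 θ
      set cy := ∑ s : Fin T, y s * Real.cos ((s:ℤ) * θ)
      set sy := ∑ s : Fin T, y s * Real.sin ((s:ℤ) * θ)
      set cx := ∑ t : Fin T, x t * Real.cos ((t:ℤ) * θ)
      set sx := ∑ t : Fin T, x t * Real.sin ((t:ℤ) * θ)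
      nlinarith [sq_nonneg (cy - cx), sq_nonneg (sy - sx), sq_nonneg (cy + cx),
        sq_nonneg (sy + sx), mul_le_mul_of_nonneg_right h1
          (show (0:ℝ) ≤ ((cy^2+sy^2)+(cx^2+sx^2))/2 by positivity)]
    have hrhs : (∫ θ in (-π)..π, M * ((((∑ s : Fin T, y s * Real.cos ((s:ℤ) * θ)) ^ 2
            + (∑ s : Fin T, y s * Real.sin ((s:ℤ) * θ)) ^ 2)
          + ((∑ t : Fin T, x t * Real.cos ((t:ℤ) * θ)) ^ 2
            + (∑ t : Fin T, x t * Real.sin ((t:ℤ) * θ)) ^ 2)) / 2))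
        = M * (2 * π) := by
      rw [intervalIntegral.integral_const_mul]
      congr 1
      rw [intervalIntegral.integral_div, intervalIntegral.integral_add
        (((by fun_prop : Continuous fun θ:ℝ => ((∑ s : Fin T, y s * Real.cos ((s:ℤ) * θ)) ^ 2
            + (∑ s : Fin T, y s * Real.sin ((s:ℤ) * θ)) ^ 2))).intervalIntegrable _ _)
        (((by fun_prop : Continuous fun θ:ℝ => ((∑ t : Fin T, x t * Real.cos ((t:ℤ) * θ)) ^ 2
            + (∑ t : Fin T, x t * Real.sin ((t:ℤ) * θ)) ^ 2))).intervalIntegrable _ _),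
        parseval T y, parseval T x, hx, hy]
      ring
    calc (2*π)⁻¹ * ∫ θ in (-π)..π, I θ * ((∑ s : Fin T, y s * Real.cos ((s:ℤ) * θ))
          * (∑ t : Fin T, x t * Real.cos ((t:ℤ) * θ))
        + (∑ s : Fin T, y s * Real.sin ((s:ℤ) * θ))
          * (∑ t : Fin T, x t * Real.sin ((t:ℤ) * θ)))
        ≤ (2*π)⁻¹ * (M * (2 * π)) := by
          rw [← hrhs]
          exact mul_le_mul_of_nonneg_left hmono (by positivity)
      _ = M := by field_simp
  -- conclude
  refine Real.sSup_le ?_ hM0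
  rintro r ⟨x, hx, rfl⟩
  have hQ0 : 0 ≤ ∑ i, (Shat.mulVec x i) ^ 2 := Finset.sum_nonneg fun i _ => sq_nonneg _
  rcases eq_or_lt_of_le hQ0 with hQ | hQ
  · rw [← hQ, Real.sqrt_zero]; exact hM0
  · set Q := ∑ i, (Shat.mulVec x i) ^ 2 with hQdef
    set q := Real.sqrt Q with hqdef
    have hq : 0 < q := Real.sqrt_pos.mpr hQ
    have hq2 : q ^ 2 = Q := Real.sq_sqrt hQ0
    have hy : (∑ i, (Shat.mulVec x i / q) ^ 2) = 1 := by
      simp_rw [div_pow]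
      rw [← Finset.sum_div, ← hQdef, ← hq2]
      field_simp
    have hval : (∑ s, (Shat.mulVec x s / q) * Shat.mulVec x s) = q := by
      have : (∑ s, (Shat.mulVec x s / q) * Shat.mulVec x s)
          = (∑ s, (Shat.mulVec x s) ^ 2) / q := by
        rw [Finset.sum_div]
        refine Finset.sum_congr rfl fun s _ => ?_
        rw [sq]
        ring
      rw [this, ← hQdef, ← hq2]
      field_simp [sq]
    have := key x (fun i => Shat.mulVec x i / q) hx hy
    rw [hval] at this
    exact this
end
end

section
/- Let S(x) = (1/2)a_0 + Σ_{k=1}^{n} [a_k cos(kx) + b_k sin(kx)] be a real trigonometric polynomial of order n. For any x* ∈ ℝ, δ > 0 and integer l ≥ 2(1+δ)n, let x_j = x* + 2πj/l for 0 ≤ j ≤ l. Then max_{x∈ℝ} |S(x)| ≤ (1 + δ^{-1}) max_{0≤j≤l} |S(x_j)|. -/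
open Real Finset Complex

noncomputable section

noncomputable def E (k : ℤ) (t : ℝ) : ℂ := Complex.exp (k * t * Complex.I)

lemma E_zero (t : ℝ) : E 0 t = 1 := by simp [E]

lemma E_mul (k k' : ℤ) (t : ℝ) : E k t * E k' t = E (k + k') t := by
  simp [E, ← Complex.exp_add]; ring_nf

lemma E_sub (k : ℤ) (x y : ℝ) : E k (x - y) = E k x * E (-k) y := by
  simp [E, ← Complex.exp_add]; ring_nf

lemma norm_E (k : ℤ) (t : ℝ) : ‖E k t‖ = 1 := by
  have : ((k : ℂ) * t * Complex.I) = ((k * t : ℝ) : ℂ) * Complex.I := by push_cast; ring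
  rw [E, this, Complex.norm_exp_ofReal_mul_I]

lemma conj_E (k : ℤ) (t : ℝ) : (starRingEnd ℂ) (E k t) = E (-k) t := by
  rw [E, E, ← Complex.exp_conj]
  congr 1
  simp

lemma orth (l : ℕ) (xstar : ℝ) (k : ℤ) (hk : k ≠ 0) (hkl : k.natAbs < l) :
    ∑ j ∈ Finset.range l, E k (xstar + 2*π*j/l) = 0 := by
  have hl0 : (l : ℂ) ≠ 0 := by
    exact_mod_cast Nat.cast_ne_zero.mpr (by omega)
  set ζ : ℂ := Complex.exp ((k : ℂ) * (2*π/l) * Complex.I) with hζ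
  have hterm : ∀ j ∈ Finset.range l, E k (xstar + 2*π*j/l) = E k xstar * ζ ^ j := by
    intro j _
    rw [E, E, hζ, ← Complex.exp_nat_mul, ← Complex.exp_add]
    congr 1
    push_cast
    field_simp
  rw [Finset.sum_congr rfl hterm, ← Finset.mul_sum]
  have hζne : ζ ≠ 1 := by
    intro h
    rw [hζ, Complex.exp_eq_one_iff] at h
    obtain ⟨m, hm⟩ := h
    have hπ : (π : ℂ) ≠ 0 := by exact_mod_cast Real.pi_ne_zero
    have hne : (2*(π:ℂ)*Complex.I) ≠ 0 := by
      simp [Complex.I_ne_zero, hπ]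
    have hk' : (k : ℂ) = m * l := by
      field_simp at hm
      apply mul_left_cancel₀ hne
      linear_combination (2*(π:ℂ)*Complex.I) * hm
    have hkz : k = m * l := by exact_mod_cast hk'
    have hm0 : m ≠ 0 := by rintro rfl; simp at hkz; exact hk hkz
    have : k.natAbs = m.natAbs * l := by rw [hkz, Int.natAbs_mul]; simp
    have : l ≤ k.natAbs := by
      rw [this]
      have : 1 ≤ m.natAbs := Int.natAbs_pos.mpr hm0
      nlinarith
    omega
  have hζl : ζ ^ l = 1 := by
    rw [hζ, ← Complex.exp_nat_mul]
    have : (l : ℂ) * ((k : ℂ) * (2*π/l) * Complex.I) = (k : ℂ) * (2 * π * Complex.I) := by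
      field_simp
    rw [this, Complex.exp_int_mul_two_pi_mul_I]
  rw [geom_sum_eq hζne, hζl]
  simp

lemma fiber_card (N : ℕ) (k : ℤ) :
    (Finset.filter (fun p => (p.1:ℤ) - (p.2:ℤ) = k) (Finset.range N ×ˢ Finset.range N)).card
      = N - k.natAbs := by
  rw [← Finset.card_range (N - k.natAbs)]
  apply Finset.card_bij' (i := fun p _ => min p.1 p.2)
    (j := fun i _ => (i + (if 0 ≤ k then k.natAbs else 0), i + (if 0 ≤ k then 0 else k.natAbs)))
  · intro p hp
    simp only [Finset.mem_filter, Finset.mem_product, Finset.mem_range] at hp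
    simp only [Finset.mem_range]
    rcases hp with ⟨⟨h1, h2⟩, h3⟩
    omega
  · intro i hi
    simp only [Finset.mem_range] at hi
    simp only [Finset.mem_filter, Finset.mem_product, Finset.mem_range]
    split_ifs with h <;> refine ⟨⟨?_, ?_⟩, ?_⟩ <;> omega
  · intro p hp
    simp only [Finset.mem_filter, Finset.mem_product, Finset.mem_range] at hp
    rcases hp with ⟨⟨h1, h2⟩, h3⟩
    ext <;> simp <;> split_ifs with h <;> omega
  · intro i hi
    simp only [Finset.mem_range] at hi
    split_ifs with h <;> simp

lemma fejer_prod (N : ℕ) (t : ℝ) :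
    (∑ j ∈ Finset.range N, E j t) * (∑ j ∈ Finset.range N, E (-(j:ℤ)) t) =
    ∑ k ∈ Finset.Icc (-(N:ℤ)+1) ((N:ℤ)-1), ((N - k.natAbs : ℕ) : ℂ) * E k t := by
  have hmaps : ∀ p ∈ Finset.range N ×ˢ Finset.range N,
      ((p.1:ℤ) - (p.2:ℤ)) ∈ Finset.Icc (-(N:ℤ)+1) ((N:ℤ)-1) := by
    intro p hp
    simp only [Finset.mem_product, Finset.mem_range] at hp
    simp only [Finset.mem_Icc]
    omega
  calc (∑ j ∈ Finset.range N, E j t) * (∑ j ∈ Finset.range N, E (-(j:ℤ)) t)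
      = ∑ p ∈ Finset.range N ×ˢ Finset.range N, E ((p.1:ℤ) - (p.2:ℤ)) t := by
        rw [Finset.sum_mul_sum, ← Finset.sum_product']
        apply Finset.sum_congr rfl
        intro p _
        rw [show ((p.1:ℤ)) - (p.2:ℤ) = (p.1:ℤ) + -(p.2:ℤ) from by ring, ← E_mul]
    _ = ∑ k ∈ Finset.Icc (-(N:ℤ)+1) ((N:ℤ)-1), ((N - k.natAbs : ℕ) : ℂ) * E k t := by
        rw [← Finset.sum_fiberwise_of_maps_to hmaps (fun p => E ((p.1:ℤ) - (p.2:ℤ)) t)]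
        apply Finset.sum_congr rfl
        intro k _
        rw [Finset.sum_congr rfl (fun p hp => by
          simp only [Finset.mem_filter] at hp
          rw [hp.2]), Finset.sum_const, fiber_card]
        simp

lemma reproduce (l n N : ℕ) (hnN : (n:ℤ) ≤ (N:ℤ) - 1) (hNl : n + N ≤ l) (xstar x : ℝ)
    (c d : ℤ → ℂ) :
    ∑ j ∈ Finset.range l, (∑ k ∈ Finset.Icc (-(n:ℤ)) n, c k * E k (xstar + 2*π*j/l)) *
        (∑ k' ∈ Finset.Icc (1-(N:ℤ)) ((N:ℤ)-1), d k' * E k' (x - (xstar + 2*π*j/l))) =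
    l * ∑ k ∈ Finset.Icc (-(n:ℤ)) n, c k * (d k * E k x) := by
  have hinner : ∀ k ∈ Finset.Icc (-(n:ℤ)) n, ∀ k' ∈ Finset.Icc (1-(N:ℤ)) ((N:ℤ)-1),
      ∑ j ∈ Finset.range l, (c k * E k (xstar + 2*π*j/l)) * (d k' * E k' (x - (xstar + 2*π*j/l)))
        = if k' = k then (l:ℂ) * (c k * (d k * E k x)) else 0 := by
    intro k hk k' hk'
    simp only [Finset.mem_Icc] at hk hk'
    have hterm : ∀ j : ℕ, (c k * E k (xstar + 2*π*j/l)) * (d k' * E k' (x - (xstar + 2*π*j/l)))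
        = (c k * (d k' * E k' x)) * E (k - k') (xstar + 2*π*j/l) := by
      intro j
      rw [E_sub, show k - k' = k + -k' from by ring, ← E_mul]
      ring
    simp_rw [hterm]
    rw [← Finset.mul_sum]
    by_cases h : k' = k
    · subst h
      simp only [sub_self, if_pos rfl, E_zero]
      simp [Finset.sum_const, mul_comm]
    · rw [orth l xstar (k - k') (by omega) (by omega), if_neg h, mul_zero]
  calc ∑ j ∈ Finset.range l, (∑ k ∈ Finset.Icc (-(n:ℤ)) n, c k * E k (xstar + 2*π*j/l)) *
        (∑ k' ∈ Finset.Icc (1-(N:ℤ)) ((N:ℤ)-1), d k' * E k' (x - (xstar + 2*π*j/l)))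
      = ∑ k ∈ Finset.Icc (-(n:ℤ)) n, ∑ k' ∈ Finset.Icc (1-(N:ℤ)) ((N:ℤ)-1),
          ∑ j ∈ Finset.range l,
            (c k * E k (xstar + 2*π*j/l)) * (d k' * E k' (x - (xstar + 2*π*j/l))) := by
        simp_rw [Finset.sum_mul_sum]
        rw [Finset.sum_comm]
        exact Finset.sum_congr rfl fun k _ => Finset.sum_comm
    _ = ∑ k ∈ Finset.Icc (-(n:ℤ)) n, ∑ k' ∈ Finset.Icc (1-(N:ℤ)) ((N:ℤ)-1),
          (if k' = k then (l:ℂ) * (c k * (d k * E k x)) else 0) := by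
        exact Finset.sum_congr rfl fun k hk => Finset.sum_congr rfl fun k' hk' => hinner k hk k' hk'
    _ = l * ∑ k ∈ Finset.Icc (-(n:ℤ)) n, c k * (d k * E k x) := by
        rw [Finset.mul_sum]
        apply Finset.sum_congr rfl
        intro k hk
        simp only [Finset.mem_Icc] at hk
        rw [Finset.sum_ite_eq' (Finset.Icc (1-(N:ℤ)) ((N:ℤ)-1)) k]
        rw [if_pos (by simp only [Finset.mem_Icc]; omega)]

noncomputable def Fe (N : ℕ) (t : ℝ) : ℂ :=
  ∑ k ∈ Finset.Icc (1-(N:ℤ)) ((N:ℤ)-1), ((N - k.natAbs : ℕ) : ℂ) * E k t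

lemma Fe_eq_normSq (N : ℕ) (t : ℝ) :
    Fe N t = ((Complex.normSq (∑ j ∈ Finset.range N, E j t) : ℝ) : ℂ) := by
  rw [Fe, show (1-(N:ℤ)) = -(N:ℤ)+1 from by ring, ← fejer_prod, ← Complex.mul_conj]
  congr 1
  rw [map_sum]
  exact Finset.sum_congr rfl fun j _ => (conj_E j t).symm

lemma grid_fe (l N : ℕ) (hN1 : 1 ≤ N) (hN : N ≤ l) (xstar x : ℝ) :
    ∑ j ∈ Finset.range l, Fe N (x - (xstar + 2*π*j/l)) = ((N * l : ℕ) : ℂ) := by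
  unfold Fe
  rw [Finset.sum_comm]
  have hinner : ∀ k ∈ Finset.Icc (1-(N:ℤ)) ((N:ℤ)-1),
      ∑ j ∈ Finset.range l, ((N - k.natAbs : ℕ) : ℂ) * E k (x - (xstar + 2*π*j/l))
        = if k = 0 then ((N * l : ℕ) : ℂ) else 0 := by
    intro k hk
    simp only [Finset.mem_Icc] at hk
    have hterm : ∀ j : ℕ, ((N - k.natAbs : ℕ) : ℂ) * E k (x - (xstar + 2*π*j/l))
        = (((N - k.natAbs : ℕ) : ℂ) * E k x) * E (-k) (xstar + 2*π*j/l) := by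
      intro j; rw [E_sub]; ring
    simp_rw [hterm]
    rw [← Finset.mul_sum]
    by_cases h : k = 0
    · subst h
      simp only [if_pos rfl, neg_zero, E_zero]
      push_cast
      simp [Finset.sum_const, E_zero]
      try ring
    · rw [orth l xstar (-k) (by omega) (by omega), if_neg h, mul_zero]
  rw [Finset.sum_congr rfl hinner, Finset.sum_ite_eq' _ (0:ℤ)]
  rw [if_pos (by simp only [Finset.mem_Icc]; omega)]

noncomputable def cc (a b : ℕ → ℝ) : ℤ → ℂ := fun k =>
  if k = 0 then (a 0 : ℂ)/2 else
  if 0 < k then ((a k.natAbs : ℂ) - (b k.natAbs : ℂ) * Complex.I)/2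
  else ((a k.natAbs : ℂ) + (b k.natAbs : ℂ) * Complex.I)/2

lemma pair_eq (a b : ℕ → ℝ) (k : ℕ) (hk : 1 ≤ k) (t : ℝ) :
    cc a b k * E k t + cc a b (-(k:ℤ)) * E (-(k:ℤ)) t
      = ((a k * Real.cos (k * t) + b k * Real.sin (k * t) : ℝ) : ℂ) := by
  have h1 : ((k:ℤ) : ℂ) ≠ 0 := by exact_mod_cast (by omega : (k:ℤ) ≠ 0)
  rw [cc, cc]
  simp only [show ¬((k:ℤ) = 0) from by omega, show (0:ℤ) < k from by omega,
    show ¬(-(k:ℤ) = 0) from by omega, show ¬((0:ℤ) < -(k:ℤ)) from by omega,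
    if_true, if_false, ite_true, ite_false, Int.natAbs_neg, Int.natAbs_natCast]
  rw [E, E]
  have hz : ((-(k:ℤ) : ℤ) : ℂ) * t * Complex.I = -(((k:ℤ):ℂ) * t) * Complex.I := by push_cast; ring
  rw [hz, Complex.exp_mul_I, Complex.exp_mul_I, Complex.cos_neg, Complex.sin_neg]
  push_cast [Complex.ofReal_cos, Complex.ofReal_sin]
  ring_nf
  simp [Complex.I_sq]
  try ring

lemma trig_complex (n : ℕ) (a b : ℕ → ℝ) (t : ℝ) :
    ((a 0 / 2 + ∑ k ∈ Finset.Icc 1 n, (a k * Real.cos (k * t) + b k * Real.sin (k * t)) : ℝ) : ℂ)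
    = ∑ k ∈ Finset.Icc (-(n:ℤ)) n, cc a b k * E k t := by
  have hsplit : Finset.Icc (-(n:ℤ)) n = Finset.Icc (-(n:ℤ)) (-1) ∪ Finset.Icc 0 n := by
    ext k; simp only [Finset.mem_Icc, Finset.mem_union]; omega
  have hdisj : Disjoint (Finset.Icc (-(n:ℤ)) (-1)) (Finset.Icc 0 (n:ℤ)) := by
    rw [Finset.disjoint_left]; intro k hk hk'
    simp only [Finset.mem_Icc] at hk hk'; omega
  have hins : Finset.Icc (0:ℤ) n = insert (0:ℤ) (Finset.Icc (1:ℤ) (n:ℤ)) := by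
    ext k; simp only [Finset.mem_Icc, Finset.mem_insert]; omega
  have h0 : (0:ℤ) ∉ Finset.Icc (1:ℤ) (n:ℤ) := by simp
  have hneg : ∑ k ∈ Finset.Icc (-(n:ℤ)) (-1), cc a b k * E k t
      = ∑ k ∈ Finset.Icc (1:ℤ) n, cc a b (-k) * E (-k) t := by
    refine Finset.sum_nbij' (fun k => -k) (fun k => -k) ?_ ?_ ?_ ?_ ?_
    · intro k hk; simp only [Finset.mem_Icc] at hk ⊢; omega
    · intro k hk; simp only [Finset.mem_Icc] at hk ⊢; omega
    · intro k _; ring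
    · intro k _; ring
    · intro k _; rw [neg_neg]
  have hcast : ∀ (g : ℤ → ℂ), ∑ k ∈ Finset.Icc (1:ℤ) n, g k = ∑ k ∈ Finset.Icc (1:ℕ) n, g k := by
    intro g
    refine Finset.sum_nbij' (fun k => k.toNat) (fun k => (k:ℤ)) ?_ ?_ ?_ ?_ ?_
    · intro k hk; simp only [Finset.mem_Icc] at hk ⊢; omega
    · intro k hk; simp only [Finset.mem_Icc] at hk ⊢; omega
    · intro k hk; simp only [Finset.mem_Icc] at hk; omega
    · intro k hk; simp only [Finset.mem_Icc] at hk; omega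
    · intro k hk; simp only [Finset.mem_Icc] at hk; congr 1; omega
  have hpt : ∀ k ∈ Finset.Icc (1:ℕ) n,
      cc a b (k:ℤ) * E (k:ℤ) t + cc a b (-(k:ℤ)) * E (-(k:ℤ)) t
        = ((a k * Real.cos (k * t) + b k * Real.sin (k * t) : ℝ) : ℂ) := by
    intro k hk
    simp only [Finset.mem_Icc] at hk
    exact pair_eq a b k hk.1 t
  have hL : ((a 0 / 2 + ∑ k ∈ Finset.Icc 1 n,
        (a k * Real.cos (k * t) + b k * Real.sin (k * t)) : ℝ) : ℂ)
      = cc a b 0 * E 0 t + ∑ k ∈ Finset.Icc (1:ℕ) n,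
          (cc a b (k:ℤ) * E (k:ℤ) t + cc a b (-(k:ℤ)) * E (-(k:ℤ)) t) := by
    rw [Finset.sum_congr rfl hpt]
    rw [cc]
    simp only [if_pos rfl, E_zero, mul_one]
    push_cast
    ring
  rw [hL, hsplit, Finset.sum_union hdisj, hins, Finset.sum_insert h0, hneg,
    hcast (fun k => cc a b (-k) * E (-k) t), hcast (fun k => cc a b k * E k t),
    Finset.sum_add_distrib]
  ring

/-- **Bernstein-type grid bound for trigonometric polynomials** (Zygmund).
Let `S(x) = a₀/2 + Σ_{k=1}^n (a_k cos kx + b_k sin kx)` be a trigonometric polynomial of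
order `n`.  For any `x* ∈ ℝ`, `δ > 0` and integer `l ≥ 2(1+δ)n`, with grid points
`x_j = x* + 2πj/l`, `0 ≤ j ≤ l`, we have
`max_x |S(x)| ≤ (1 + δ⁻¹) max_{0 ≤ j ≤ l} |S(x_j)|`. -/
theorem statement_4
    (n : ℕ) (a b : ℕ → ℝ) (S : ℝ → ℝ)
    (hS : ∀ x : ℝ, S x =
      a 0 / 2 + ∑ k ∈ Finset.Icc 1 n, (a k * Real.cos (k * x) + b k * Real.sin (k * x)))
    (xstar : ℝ) (δ : ℝ) (hδ : 0 < δ)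
    (l : ℕ) (hl : 2 * (1 + δ) * n ≤ l)
    (x : ℝ) :
    |S x| ≤ (1 + δ⁻¹) * (⨆ j : Fin (l + 1), |S (xstar + 2 * π * (j : ℕ) / l)|) := by
  set M := ⨆ j : Fin (l + 1), |S (xstar + 2 * π * (j : ℕ) / l)| with hMdef
  have hMb : ∀ j : Fin (l + 1), |S (xstar + 2 * π * (j : ℕ) / l)| ≤ M :=
    fun j => le_ciSup (f := fun j : Fin (l+1) => |S (xstar + 2 * π * (j:ℕ) / l)|)
      (Set.Finite.bddAbove (Set.finite_range _)) j
  have hM0 : 0 ≤ M := (abs_nonneg _).trans (hMb 0)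
  have h1δ : (1 : ℝ) ≤ 1 + δ⁻¹ := by
    have : 0 < δ⁻¹ := inv_pos.mpr hδ
    linarith
  rcases Nat.eq_zero_or_pos n with hn | hn
  · -- n = 0 : S is constant
    have hconst : ∀ t : ℝ, S t = a 0 / 2 := by
      intro t; rw [hS t, hn]; simp
    calc |S x| = |S (xstar + 2 * π * ((0 : Fin (l+1)) : ℕ) / l)| := by
          rw [hconst, hconst]
      _ ≤ M := hMb 0
      _ ≤ (1 + δ⁻¹) * M := le_mul_of_one_le_left hM0 h1δ
  · -- n ≥ 1
    have hn1 : (1:ℝ) ≤ (n:ℝ) := by exact_mod_cast hn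
    have hl2 : 2 * n < l := by
      have h1 : (2*(n:ℝ)) < 2*(1+δ)*n := by nlinarith
      have h2 : (2*(n:ℝ)) < l := h1.trans_le hl
      exact_mod_cast h2
    set m := l - n with hmdef
    have hmn : n + m = l := by omega
    have hnm1 : (n:ℤ) ≤ (m:ℤ) - 1 := by push_cast; omega
    have hl0 : 0 < l := by omega
    set xj : ℕ → ℝ := fun j => xstar + 2*π*j/l with hxj
    have hSc : ∀ t : ℝ, (S t : ℂ) = ∑ k ∈ Finset.Icc (-(n:ℤ)) n, cc a b k * E k t := by
      intro t; rw [hS t]; exact trig_complex n a b t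
    set d1 : ℤ → ℂ := fun k => ((m - k.natAbs : ℕ) : ℂ) with hd1
    set d2 : ℤ → ℂ := fun k => ((n - k.natAbs : ℕ) : ℂ) with hd2
    have hrep1 := reproduce l n m hnm1 (le_of_eq hmn) xstar x (cc a b) d1
    have hrep2 := reproduce l n m hnm1 (le_of_eq hmn) xstar x (cc a b) d2
    have hk1 : ∀ t : ℝ, (∑ k' ∈ Finset.Icc (1-(m:ℤ)) ((m:ℤ)-1), d1 k' * E k' t) = Fe m t := by
      intro t; rw [Fe]
    have hk2 : ∀ t : ℝ, (∑ k' ∈ Finset.Icc (1-(m:ℤ)) ((m:ℤ)-1), d2 k' * E k' t) = Fe n t := by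
      intro t
      rw [Fe]
      symm
      apply Finset.sum_subset
      · intro k hk; simp only [Finset.mem_Icc] at hk ⊢; omega
      · intro k hk hk'
        simp only [Finset.mem_Icc] at hk hk'
        have hz : n - k.natAbs = 0 := by omega
        simp only [hd2, hz]
        simp
    have e1 : ∑ j ∈ Finset.range l, (S (xj j) : ℂ) * Fe m (x - xj j)
        = l * ∑ k ∈ Finset.Icc (-(n:ℤ)) n, cc a b k * (d1 k * E k x) := by
      rw [← hrep1]
      apply Finset.sum_congr rfl
      intro j _
      rw [hSc, hk1]
    have e2 : ∑ j ∈ Finset.range l, (S (xj j) : ℂ) * Fe n (x - xj j)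
        = l * ∑ k ∈ Finset.Icc (-(n:ℤ)) n, cc a b k * (d2 k * E k x) := by
      rw [← hrep2]
      apply Finset.sum_congr rfl
      intro j _
      rw [hSc, hk2]
    have hcoef : ∀ k ∈ Finset.Icc (-(n:ℤ)) n,
        cc a b k * (d1 k * E k x) - cc a b k * (d2 k * E k x)
          = ((m:ℂ) - (n:ℂ)) * (cc a b k * E k x) := by
      intro k hk
      simp only [Finset.mem_Icc] at hk
      have hkn : k.natAbs ≤ n := by omega
      have hkm : k.natAbs ≤ m := by omega
      simp only [hd1, hd2]
      rw [Nat.cast_sub hkm, Nat.cast_sub hkn]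
      push_cast
      ring
    have hcomb : (l:ℂ) * (((m:ℂ) - n) * (S x : ℂ))
        = ∑ j ∈ Finset.range l, (S (xj j) : ℂ) * (Fe m (x - xj j) - Fe n (x - xj j)) := by
      have : ∑ j ∈ Finset.range l, (S (xj j) : ℂ) * (Fe m (x - xj j) - Fe n (x - xj j))
          = (∑ j ∈ Finset.range l, (S (xj j) : ℂ) * Fe m (x - xj j))
            - ∑ j ∈ Finset.range l, (S (xj j) : ℂ) * Fe n (x - xj j) := by
        rw [← Finset.sum_sub_distrib]
        apply Finset.sum_congr rfl
        intro j _; ring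
      rw [this, e1, e2, ← mul_sub, ← Finset.sum_sub_distrib,
        Finset.sum_congr rfl hcoef, ← Finset.mul_sum, ← hSc x]
    -- real values of Fejér kernels on the grid
    set fm : ℕ → ℝ := fun j => Complex.normSq (∑ i ∈ Finset.range m, E i (x - xj j)) with hfm
    set fn : ℕ → ℝ := fun j => Complex.normSq (∑ i ∈ Finset.range n, E i (x - xj j)) with hfn
    have hFm : ∀ j : ℕ, Fe m (x - xj j) = ((fm j : ℝ) : ℂ) := fun j => Fe_eq_normSq m _
    have hFn : ∀ j : ℕ, Fe n (x - xj j) = ((fn j : ℝ) : ℂ) := fun j => Fe_eq_normSq n _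
    have hfm0 : ∀ j, 0 ≤ fm j := fun j => Complex.normSq_nonneg _
    have hfn0 : ∀ j, 0 ≤ fn j := fun j => Complex.normSq_nonneg _
    have hgm : ∑ j ∈ Finset.range l, fm j = (m * l : ℕ) := by
      have h := grid_fe l m (by omega) (by omega) xstar x
      rw [Finset.sum_congr rfl (fun j _ => hFm j)] at h
      rw [← Complex.ofReal_sum] at h
      exact_mod_cast h
    have hgn : ∑ j ∈ Finset.range l, fn j = (n * l : ℕ) := by
      have h := grid_fe l n (by omega) (by omega) xstar x
      rw [Finset.sum_congr rfl (fun j _ => hFn j)] at h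
      rw [← Complex.ofReal_sum] at h
      exact_mod_cast h
    have hMj : ∀ j ∈ Finset.range l, |S (xj j)| ≤ M := by
      intro j hj
      simp only [Finset.mem_range] at hj
      have := hMb ⟨j, by omega⟩
      simpa using this
    -- main estimate
    have hnorm : (l:ℝ) * (((m:ℝ) - n) * |S x|) ≤ M * (m * l + n * l) := by
      have h1 : ‖(l:ℂ) * (((m:ℂ) - n) * (S x : ℂ))‖ = (l:ℝ) * (((m:ℝ) - n) * |S x|) := by
        rw [norm_mul, norm_mul]
        have hml : ((m:ℂ) - n) = (((m:ℝ) - n : ℝ) : ℂ) := by push_cast; ring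
        rw [hml]
        simp only [Complex.norm_real, Complex.norm_natCast, Real.norm_eq_abs]
        rw [_root_.abs_of_nonneg (by
          have h' : (n:ℝ) ≤ m := by exact_mod_cast (by omega : n ≤ m)
          linarith : (0:ℝ) ≤ (m:ℝ) - n)]
      have h2 : ‖∑ j ∈ Finset.range l, (S (xj j) : ℂ) * (Fe m (x - xj j) - Fe n (x - xj j))‖
          ≤ ∑ j ∈ Finset.range l, M * (fm j + fn j) := by
        refine (norm_sum_le _ _).trans (Finset.sum_le_sum ?_)
        intro j hj
        rw [norm_mul, hFm j, hFn j, ← Complex.ofReal_sub, Complex.norm_real, Complex.norm_real,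
          Real.norm_eq_abs, Real.norm_eq_abs]
        have habs : |fm j - fn j| ≤ fm j + fn j := by
          rw [abs_le]; constructor
          · nlinarith [hfm0 j, hfn0 j]
          · nlinarith [hfm0 j, hfn0 j]
        exact mul_le_mul (hMj j hj) habs (abs_nonneg _) hM0
      have h3 : ∑ j ∈ Finset.range l, M * (fm j + fn j) = M * (m * l + n * l) := by
        rw [← Finset.mul_sum, Finset.sum_add_distrib, hgm, hgn]
        push_cast
        ring
      calc (l:ℝ) * (((m:ℝ) - n) * |S x|) = ‖(l:ℂ) * (((m:ℂ) - n) * (S x : ℂ))‖ := h1.symm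
        _ = ‖∑ j ∈ Finset.range l, (S (xj j) : ℂ) * (Fe m (x - xj j) - Fe n (x - xj j))‖ := by
            rw [hcomb]
        _ ≤ ∑ j ∈ Finset.range l, M * (fm j + fn j) := h2
        _ = M * (m * l + n * l) := h3
    -- arithmetic conclusion
    have hml : (m:ℝ) + n = l := by push_cast [← hmn]; ring
    have hmnpos : (0:ℝ) < (m:ℝ) - n := by
      have : n < m := by omega
      have := (Nat.cast_lt (α := ℝ)).mpr this
      linarith
    have hlpos : (0:ℝ) < l := by exact_mod_cast hl0
    have h6 : (l:ℝ) ≤ (1 + δ⁻¹) * ((m:ℝ) - n) := by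
      have hmr : (m:ℝ) - n = (l:ℝ) - 2*n := by
        push_cast [hmdef, Nat.cast_sub (by omega : n ≤ l)]
        ring
      rw [hmr]
      have hkey : (1 + δ⁻¹) * ((l:ℝ) - 2*n) - l = ((l:ℝ) - 2*(1+δ)*n)/δ := by
        field_simp
        ring
      nlinarith [div_nonneg (sub_nonneg.mpr hl) hδ.le]
    -- finish: l*(m-n)*|S x| ≤ M*l*l ≤ (1+δ⁻¹)*(m-n)*l*M
    have h7 : M * ((m:ℝ) * l + n * l) = M * l * l := by
      rw [show (m:ℝ) * l + n * l = ((m:ℝ) + n) * l from by ring, hml]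
      ring
    have h8 : M * l * l ≤ ((1 + δ⁻¹) * M) * (((m:ℝ) - n) * l) := by
      have := mul_le_mul_of_nonneg_left h6 (mul_nonneg hM0 hlpos.le)
      calc M * l * l = (M * l) * l := by ring
        _ ≤ (M * l) * ((1 + δ⁻¹) * ((m:ℝ) - n)) := by
            exact mul_le_mul_of_nonneg_left h6 (mul_nonneg hM0 hlpos.le)
        _ = ((1 + δ⁻¹) * M) * (((m:ℝ) - n) * l) := by ring
    have h9 : ((l:ℝ) * (((m:ℝ) - n))) * |S x| ≤ ((l:ℝ) * (((m:ℝ) - n))) * ((1 + δ⁻¹) * M) := by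
      calc ((l:ℝ) * (((m:ℝ) - n))) * |S x| = (l:ℝ) * (((m:ℝ) - n) * |S x|) := by ring
        _ ≤ M * (m * l + n * l) := hnorm
        _ = M * l * l := h7
        _ ≤ ((1 + δ⁻¹) * M) * (((m:ℝ) - n) * l) := h8
        _ = ((l:ℝ) * (((m:ℝ) - n))) * ((1 + δ⁻¹) * M) := by ring
    exact le_of_mul_le_mul_left h9 (mul_pos hlpos hmnpos)
end
end

section
/- Let (X_t) be a stationary process with mean zero, autocovariances γ_k = E[X_0 X_k], and Σ_T = (γ_{s-t})_{1≤s,t≤T}. Let K be a symmetric kernel with K(0)=1, |K(x)| ≤ 1, and K(x)=0 for |x|>1, let 1 ≤ B_T < T, and let Σ̂_{T,B_T} = [K((s-t)/B_T) γ̂_{s-t}]_{1≤s,t≤T}, where γ̂_k = T^{-1} Σ_{t=|k|+1}^T X_{t-|k|} X_t. Then the bias satisfies λ(E Σ̂_{T,B_T} − Σ_T) ≤ b_T, where b_T = 2 Σ_{k=1}^{B_T} [1 − K(k/B_T)] |γ_k| + (2/T) Σ_{k=1}^{B_T} k|γ_k| + 2 Σ_{k=B_T+1}^{T-1} |γ_k|.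 -/
open MeasureTheory ProbabilityTheory Filter Finset Real Topology

noncomputable section

namespace TS

variable {Ω : Type*} [MeasurableSpace Ω]

/-- The causal process `X_t = g(ε_t, ε_{t-1}, …)`. -/
def X (g : (ℕ → ℝ) → ℝ) (ε : ℤ → Ω → ℝ) (t : ℤ) (ω : Ω) : ℝ :=
  g fun k => ε (t - k) ω

/-- The coupled process `X'_t = g(ε_t, …, ε_1, ε'_0, ε_{-1}, …)`, where `ε 0` has been
replaced by the independent copy `ε'`. -/
def X' (g : (ℕ → ℝ) → ℝ) (ε : ℤ → Ω → ℝ) (ε' : Ω → ℝ) (t : ℤ) (ω : Ω) : ℝ :=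
  g fun k => if t - (k : ℤ) = 0 then ε' ω else ε (t - k) ω

/-- `ε t` (t ∈ ℤ) together with the extra copy `ε'` form an i.i.d. family. -/
def IID (μ : Measure Ω) (ε : ℤ → Ω → ℝ) (ε' : Ω → ℝ) : Prop :=
  (∀ t, Measurable (ε t)) ∧ Measurable ε' ∧
    iIndepFun
      (fun i : Option ℤ => i.elim ε' ε) μ ∧
    ∀ t : ℤ, Measure.map (ε t) μ = Measure.map ε' μ

/-- Physical dependence measure `δ_q(t) = ‖X_t − X'_t‖_q`. -/
def delta (μ : Measure Ω) (g : (ℕ → ℝ) → ℝ) (ε : ℤ → Ω → ℝ) (ε' : Ω → ℝ)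
    (q : ℝ) (t : ℕ) : ℝ :=
  (eLpNorm (fun ω => X g ε t ω - X' g ε ε' t ω) (ENNReal.ofReal q) μ).toReal

/-- Tail sum `Θ_q(m) = Σ_{t≥m} δ_q(t)` of the physical dependence measures. -/
def Theta (μ : Measure Ω) (g : (ℕ → ℝ) → ℝ) (ε : ℤ → Ω → ℝ) (ε' : Ω → ℝ)
    (q : ℝ) (m : ℕ) : ℝ :=
  ∑' t : ℕ, delta μ g ε ε' q (m + t)

/-- Sample autocovariance `γ̂_k = T⁻¹ Σ_{t=|k|+1}^T Y_{t-|k|} Y_t`. -/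
def hgamma (Y : ℤ → Ω → ℝ) (T : ℕ) (k : ℤ) (ω : Ω) : ℝ :=
  (T : ℝ)⁻¹ * ∑ t ∈ Finset.Icc (k.natAbs + 1) T, Y ((t : ℤ) - (k.natAbs : ℤ)) ω * Y (t : ℤ) ω

/-- Autocovariance `γ_k = E[Y_0 Y_k]`. -/
def gamma (μ : Measure Ω) (Y : ℤ → Ω → ℝ) (k : ℤ) : ℝ := ∫ ω, Y 0 ω * Y k ω ∂μ

/-- Operator norm (spectral radius) `λ(A) = max_{|x|=1} |A x|` of a real matrix. -/
def opNorm {T : ℕ} (A : Matrix (Fin T) (Fin T) ℝ) : ℝ :=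
  sSup {r : ℝ | ∃ x : Fin T → ℝ, ∑ i, x i ^ 2 = 1 ∧
    r = Real.sqrt (∑ i, (A.mulVec x i) ^ 2)}

/-- The autocovariance matrix `Σ_T = (γ_{s-t})_{1≤s,t≤T}`. -/
def covM (μ : Measure Ω) (Y : ℤ → Ω → ℝ) (T : ℕ) : Matrix (Fin T) (Fin T) ℝ :=
  Matrix.of fun s t => gamma μ Y ((s : ℤ) - (t : ℤ))

/-- The sample autocovariance matrix `Σ̂_T = (γ̂_{s-t})_{1≤s,t≤T}`. -/
def scovM (Y : ℤ → Ω → ℝ) (T : ℕ) (ω : Ω) : Matrix (Fin T) (Fin T) ℝ :=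
  Matrix.of fun s t => hgamma Y T ((s : ℤ) - (t : ℤ)) ω

end TS

lemma schur {T : ℕ} (A : Matrix (Fin T) (Fin T) ℝ) (R : ℝ) (hR : 0 ≤ R)
    (hrow : ∀ i, ∑ j, |A i j| ≤ R) (hcol : ∀ j, ∑ i, |A i j| ≤ R) :
    TS.opNorm A ≤ R := by
  apply Real.sSup_le _ hR
  rintro r ⟨x, hx, rfl⟩
  have key : ∑ i, (A.mulVec x i) ^ 2 ≤ R ^ 2 := by
    have h1 : ∀ i : Fin T, (A.mulVec x i) ^ 2 ≤ R * ∑ j, |A i j| * x j ^ 2 := by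
      intro i
      have e1 : (A.mulVec x i) ^ 2 ≤ (∑ j, |A i j| * |x j|) ^ 2 := by
        rw [← sq_abs]
        apply pow_le_pow_left₀ (abs_nonneg _)
        calc |A.mulVec x i| ≤ ∑ j, |A i j * x j| := by
              simpa [Matrix.mulVec, dotProduct] using
                Finset.abs_sum_le_sum_abs (fun j => A i j * x j) Finset.univ
          _ = ∑ j, |A i j| * |x j| := by simp [abs_mul]
      have e2 : (∑ j, |A i j| * |x j|) ^ 2 ≤ (∑ j, |A i j|) * ∑ j, |A i j| * x j ^ 2 := by
        have := Finset.sum_mul_sq_le_sq_mul_sq Finset.univ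
          (fun j => Real.sqrt |A i j|) (fun j => Real.sqrt |A i j| * |x j|)
        calc (∑ j, |A i j| * |x j|) ^ 2
            = (∑ j, Real.sqrt |A i j| * (Real.sqrt |A i j| * |x j|)) ^ 2 := by
              congr 1; apply Finset.sum_congr rfl; intro j _
              rw [← mul_assoc, Real.mul_self_sqrt (abs_nonneg _)]
          _ ≤ (∑ j, Real.sqrt |A i j| ^ 2) * ∑ j, (Real.sqrt |A i j| * |x j|) ^ 2 := this
          _ = (∑ j, |A i j|) * ∑ j, |A i j| * x j ^ 2 := by
              congr 1
              · exact Finset.sum_congr rfl fun j _ => Real.sq_sqrt (abs_nonneg _)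
              · apply Finset.sum_congr rfl; intro j _
                rw [mul_pow, Real.sq_sqrt (abs_nonneg _), sq_abs]
      have e3 : (∑ j, |A i j|) * ∑ j, |A i j| * x j ^ 2 ≤ R * ∑ j, |A i j| * x j ^ 2 := by
        apply mul_le_mul_of_nonneg_right (hrow i)
        exact Finset.sum_nonneg fun j _ => mul_nonneg (abs_nonneg _) (sq_nonneg _)
      linarith
    calc ∑ i, (A.mulVec x i) ^ 2 ≤ ∑ i, R * ∑ j, |A i j| * x j ^ 2 :=
          Finset.sum_le_sum fun i _ => h1 i
      _ = R * ∑ j, (∑ i, |A i j|) * x j ^ 2 := by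
          rw [← Finset.mul_sum, Finset.sum_comm]
          congr 1; apply Finset.sum_congr rfl; intro j _; rw [Finset.sum_mul]
      _ ≤ R * ∑ j, R * x j ^ 2 := by
          apply mul_le_mul_of_nonneg_left _ hR
          exact Finset.sum_le_sum fun j _ =>
            mul_le_mul_of_nonneg_right (hcol j) (sq_nonneg _)
      _ = R ^ 2 := by rw [← Finset.mul_sum, hx]; ring
  calc Real.sqrt (∑ i, (A.mulVec x i) ^ 2) ≤ Real.sqrt (R ^ 2) := Real.sqrt_le_sqrt key
    _ = R := by rw [Real.sqrt_sq hR]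


/-- **Bias bound for the tapered covariance matrix estimate.**
For a mean-zero (strictly) stationary process `(X_t)` with autocovariances `γ_k`,
a symmetric kernel `K` with `K(0) = 1`, `|K| ≤ 1`, `K = 0` outside `[-1,1]`, and a
bandwidth `1 ≤ B < T`, the expectation of the tapered estimate
`Σ̂_{T,B} = (K((s-t)/B) γ̂_{s-t})` satisfies `λ(E Σ̂_{T,B} − Σ_T) ≤ b_T`, where
`b_T = 2 Σ_{k=1}^{B}(1−K(k/B))|γ_k| + (2/T) Σ_{k=1}^{B} k|γ_k| + 2 Σ_{k=B+1}^{T-1}|γ_k|`. -/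
theorem statement_5
    {Ω : Type*} [MeasurableSpace Ω] (μ : Measure Ω) [IsProbabilityMeasure μ]
    (Xp : ℤ → Ω → ℝ) (hmeas : ∀ t, Measurable (Xp t))
    (hstat : ∀ t : ℤ,
      Measure.map (fun ω => fun i : ℤ => Xp (t + i) ω) μ =
        Measure.map (fun ω => fun i : ℤ => Xp i ω) μ)
    (hmean : ∀ t : ℤ, ∫ ω, Xp t ω ∂μ = 0)
    (hint : ∀ s t : ℤ, Integrable (fun ω => Xp s ω * Xp t ω) μ)
    (K : ℝ → ℝ) (hKsym : ∀ x : ℝ, K (-x) = K x) (hK0 : K 0 = 1)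
    (hKb : ∀ x : ℝ, |K x| ≤ 1) (hKs : ∀ x : ℝ, 1 < |x| → K x = 0)
    (T B : ℕ) (hB1 : 1 ≤ B) (hBT : B < T)
    (bT : ℝ)
    (hbT : bT =
      2 * ∑ k ∈ Finset.Icc 1 B, (1 - K ((k : ℝ) / B)) * |TS.gamma μ Xp k| +
      (2 / T) * ∑ k ∈ Finset.Icc 1 B, (k : ℝ) * |TS.gamma μ Xp k| +
      2 * ∑ k ∈ Finset.Icc (B + 1) (T - 1), |TS.gamma μ Xp k|) :
    TS.opNorm
      ((Matrix.of fun s t : Fin T =>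
          ∫ ω, K ((((s : ℤ) - (t : ℤ) : ℤ) : ℝ) / B) *
            TS.hgamma Xp T ((s : ℤ) - (t : ℤ)) ω ∂μ)
        - TS.covM μ Xp T) ≤ bT := by
  have hT0 : (0:ℕ) < T := lt_of_le_of_lt (Nat.zero_le B) hBT
  have hTR : (0:ℝ) < (T:ℝ) := by exact_mod_cast hT0
  have hBR : (0:ℝ) < (B:ℝ) := by exact_mod_cast hB1
  set γ : ℤ → ℝ := TS.gamma μ Xp with hγ
  -- stationarity of pair expectations
  have hpair : ∀ a b : ℤ, ∫ ω, Xp a ω * Xp b ω ∂μ = γ (b - a) := by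
    intro a b
    set F : (ℤ → ℝ) → ℝ := fun u => u 0 * u (b - a) with hF
    have hFm : Measurable F := (measurable_pi_apply 0).mul (measurable_pi_apply (b - a))
    have hΦ : ∀ t : ℤ, Measurable (fun ω => fun i : ℤ => Xp (t + i) ω) := fun t =>
      measurable_pi_lambda _ fun i => hmeas (t + i)
    have key : ∀ t : ℤ, ∫ ω, Xp t ω * Xp (t + (b - a)) ω ∂μ =
        ∫ u, F u ∂(Measure.map (fun ω => fun i : ℤ => Xp i ω) μ) := by
      intro t
      rw [← hstat t, integral_map (hΦ t).aemeasurable hFm.aestronglyMeasurable]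
      simp [hF]
    have h1 := key a
    have h2 := key 0
    simp only [add_sub_cancel] at h1
    simp only [zero_add] at h2
    rw [h1, ← h2]; rfl
  have hsym : ∀ k : ℤ, γ (-k) = γ k := by
    intro k
    have h1 : ∫ ω, Xp k ω * Xp 0 ω ∂μ = γ (0 - k) := hpair k 0
    have h2 : ∫ ω, Xp 0 ω * Xp k ω ∂μ = γ (k - 0) := hpair 0 k
    simp only [zero_sub, sub_zero] at h1 h2
    rw [← h1, ← h2]
    exact integral_congr_ae (Filter.Eventually.of_forall fun ω => mul_comm _ _)
  have hγnat : ∀ k : ℤ, γ k = γ (k.natAbs : ℤ) := by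
    intro k
    rcases Int.natAbs_eq k with h | h
    · rw [← h]
    · conv_lhs => rw [h]
      rw [hsym]
  -- expectation of the sample autocovariance
  have hhg : ∀ k : ℤ, ∫ ω, TS.hgamma Xp T k ω ∂μ =
      (T : ℝ)⁻¹ * ((T - k.natAbs : ℕ) : ℝ) * γ (k.natAbs : ℤ) := by
    intro k
    unfold TS.hgamma
    rw [MeasureTheory.integral_const_mul]
    rw [MeasureTheory.integral_finset_sum _ (fun t _ => hint _ _)]
    have : ∀ t ∈ Finset.Icc (k.natAbs + 1) T,
        ∫ ω, Xp ((t:ℤ) - (k.natAbs : ℤ)) ω * Xp (t:ℤ) ω ∂μ = γ (k.natAbs : ℤ) := by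
      intro t _
      rw [hpair]
      congr 1
      ring
    rw [Finset.sum_congr rfl this, Finset.sum_const, Nat.card_Icc]
    have hcard : T + 1 - (k.natAbs + 1) = T - k.natAbs := by omega
    rw [hcard, nsmul_eq_mul, ← mul_assoc]
  -- the entrywise bound function
  set c : ℕ → ℝ := fun m =>
    |K ((m : ℝ) / B) * (((T : ℝ) - m) / T) - 1| * |γ (m : ℤ)| with hc
  have hcnn : ∀ m, 0 ≤ c m := fun m => mul_nonneg (abs_nonneg _) (abs_nonneg _)
  set M : Matrix (Fin T) (Fin T) ℝ :=
    ((Matrix.of fun s t : Fin T =>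
        ∫ ω, K ((((s : ℤ) - (t : ℤ) : ℤ) : ℝ) / B) *
          TS.hgamma Xp T ((s : ℤ) - (t : ℤ)) ω ∂μ)
      - TS.covM μ Xp T) with hM
  have habs : ∀ i j : Fin T, |M i j| = c (((i:ℤ) - (j:ℤ)).natAbs) := by
    intro i j
    set k : ℤ := (i:ℤ) - (j:ℤ) with hk
    set m : ℕ := k.natAbs with hmdef
    have hmT : m ≤ T := by
      have hi := i.isLt
      have hj := j.isLt
      omega
    have hKeq : K ((k:ℝ) / B) = K ((m:ℝ) / B) := by
      rcases Int.natAbs_eq k with h | h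
      · conv_lhs => rw [h]
        rw [Int.cast_natCast]
      · conv_lhs => rw [h]
        rw [Int.cast_neg, Int.cast_natCast, neg_div, hKsym]
    have hMij : M i j = K ((m:ℝ)/B) * ((T:ℝ)⁻¹ * ((T - m : ℕ):ℝ)) * γ (m:ℤ) - γ (m:ℤ) := by
      rw [hM]
      simp only [Matrix.sub_apply, Matrix.of_apply, TS.covM, Matrix.of_apply]
      rw [MeasureTheory.integral_const_mul, hhg, ← hk, hKeq, ← hγnat]
      ring
    rw [hMij, hc]
    have hcast : ((T - m : ℕ) : ℝ) = (T:ℝ) - (m:ℝ) := by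
      push_cast [hmT]; ring
    rw [hcast]
    have : K ((m:ℝ)/B) * ((T:ℝ)⁻¹ * ((T:ℝ) - m)) * γ (m:ℤ) - γ (m:ℤ) =
        (K ((m:ℝ)/B) * (((T:ℝ) - m) / T) - 1) * γ (m:ℤ) := by
      field_simp
    rw [this, abs_mul]
  -- c 0 = 0
  have hc0 : c 0 = 0 := by
    simp only [hc, Nat.cast_zero, zero_div, hK0, sub_zero]
    rw [div_self hTR.ne', one_mul, sub_self, abs_zero, zero_mul]
  -- bound: c m for 1 ≤ m ≤ B
  have hcB : ∀ m ∈ Finset.Icc 1 B, c m ≤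
      (1 - K ((m:ℝ)/B)) * |γ (m:ℤ)| + ((m:ℝ)/T) * |γ (m:ℤ)| := by
    intro m hm
    rw [Finset.mem_Icc] at hm
    have hmT : (m:ℝ) ≤ (T:ℝ) := by
      have : m ≤ T := le_trans hm.2 hBT.le
      exact_mod_cast this
    have hq0 : (0:ℝ) ≤ (m:ℝ)/T := div_nonneg (Nat.cast_nonneg m) hTR.le
    have hq1 : (m:ℝ)/T ≤ 1 := div_le_one_of_le₀ hmT hTR.le
    have ha := hKb ((m:ℝ)/B)
    rw [abs_le] at ha
    have habs2 : |K ((m:ℝ)/B) * (((T:ℝ) - m) / T) - 1| ≤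
        (1 - K ((m:ℝ)/B)) + (m:ℝ)/T := by
      have hrw : K ((m:ℝ)/B) * (((T:ℝ) - m) / T) - 1 =
          (K ((m:ℝ)/B) - 1) - K ((m:ℝ)/B) * ((m:ℝ)/T) := by
        field_simp
        ring
      rw [hrw, abs_le]
      constructor
      · nlinarith [ha.1, ha.2, hq0, hq1]
      · nlinarith [ha.1, ha.2, hq0, hq1]
    calc c m ≤ ((1 - K ((m:ℝ)/B)) + (m:ℝ)/T) * |γ (m:ℤ)| :=
          mul_le_mul_of_nonneg_right habs2 (abs_nonneg _)
      _ = (1 - K ((m:ℝ)/B)) * |γ (m:ℤ)| + ((m:ℝ)/T) * |γ (m:ℤ)| := by ring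
  -- bound: c m for B < m
  have hcT : ∀ m ∈ Finset.Icc (B+1) (T-1), c m = |γ (m:ℤ)| := by
    intro m hm
    rw [Finset.mem_Icc] at hm
    have : (1:ℝ) < |(m:ℝ)/B| := by
      rw [abs_of_nonneg (div_nonneg (Nat.cast_nonneg m) hBR.le)]
      rw [lt_div_iff₀ hBR, one_mul]
      exact_mod_cast Nat.lt_of_lt_of_le (Nat.lt_succ_self B) hm.1
    rw [hc]
    simp only [hKs _ this, zero_mul, zero_sub, abs_neg, abs_one, one_mul]
  -- row sums of c are at most the half bound
  have hrowc : ∀ i : Fin T, ∑ j : Fin T, c (((i:ℤ) - (j:ℤ)).natAbs) ≤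
      2 * ∑ m ∈ Finset.Icc 1 (T-1), c m := by
    intro i
    have hsplit := Finset.sum_filter_add_sum_filter_not Finset.univ
      (fun j : Fin T => (j:ℕ) < (i:ℕ)) (fun j : Fin T => c (((i:ℤ) - (j:ℤ)).natAbs))
    rw [← hsplit]
    have hle : ∀ (S : Finset (Fin T)),
        (∀ x ∈ S, ∀ y ∈ S, ((i:ℤ) - (x:ℤ)).natAbs = ((i:ℤ) - (y:ℤ)).natAbs → x = y) →
        (∀ x ∈ S, ((i:ℤ) - (x:ℤ)).natAbs ≤ T - 1) →
        ∑ j ∈ S, c (((i:ℤ) - (j:ℤ)).natAbs) ≤ ∑ m ∈ Finset.Icc 1 (T-1), c m := by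
      intro S hinj hbound
      rw [show ∑ j ∈ S, c (((i:ℤ) - (j:ℤ)).natAbs) =
          ∑ m ∈ S.image (fun j : Fin T => ((i:ℤ) - (j:ℤ)).natAbs), c m from
        (Finset.sum_image hinj).symm]
      have hsub : S.image (fun j : Fin T => ((i:ℤ) - (j:ℤ)).natAbs) ⊆
          Finset.Icc 0 (T-1) := by
        intro m hm
        rw [Finset.mem_image] at hm
        obtain ⟨j, hj, rfl⟩ := hm
        rw [Finset.mem_Icc]
        exact ⟨Nat.zero_le _, hbound j hj⟩
      calc ∑ m ∈ S.image _, c m ≤ ∑ m ∈ Finset.Icc 0 (T-1), c m :=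
            Finset.sum_le_sum_of_subset_of_nonneg hsub (fun m _ _ => hcnn m)
        _ = ∑ m ∈ Finset.Icc 1 (T-1), c m := by
            have : Finset.Icc 0 (T-1) = insert 0 (Finset.Icc 1 (T-1)) := by
              ext a; simp [Finset.mem_Icc, Finset.mem_insert]; omega
            rw [this, Finset.sum_insert (by simp), hc0, zero_add]
    have h1 : ∑ j ∈ Finset.univ.filter (fun j : Fin T => (j:ℕ) < (i:ℕ)),
        c (((i:ℤ) - (j:ℤ)).natAbs) ≤ ∑ m ∈ Finset.Icc 1 (T-1), c m := by
      apply hle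
      · intro x hx y hy h
        rw [Finset.mem_filter] at hx hy
        apply Fin.ext
        omega
      · intro x _
        have := i.isLt
        have := x.isLt
        omega
    have h2 : ∑ j ∈ Finset.univ.filter (fun j : Fin T => ¬ (j:ℕ) < (i:ℕ)),
        c (((i:ℤ) - (j:ℤ)).natAbs) ≤ ∑ m ∈ Finset.Icc 1 (T-1), c m := by
      apply hle
      · intro x hx y hy h
        rw [Finset.mem_filter] at hx hy
        apply Fin.ext
        omega
      · intro x _
        have := i.isLt
        have := x.isLt
        omega
    linarith
  -- the half bound is at most bT/2
  have hhalf : 2 * ∑ m ∈ Finset.Icc 1 (T-1), c m ≤ bT := by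
    have hBsplit : ∑ m ∈ Finset.Icc 1 (T-1), c m =
        ∑ m ∈ Finset.Icc 1 B, c m + ∑ m ∈ Finset.Icc (B+1) (T-1), c m := by
      have ha : Finset.Icc 1 (T-1) = Finset.Ioc 0 (T-1) := by ext a; simp; omega
      have hb : Finset.Icc 1 B = Finset.Ioc 0 B := by ext a; simp; omega
      have hcc : Finset.Icc (B+1) (T-1) = Finset.Ioc B (T-1) := by ext a; simp
      rw [ha, hb, hcc]
      exact (Finset.sum_Ioc_consecutive _ (Nat.zero_le B) (by omega)).symm
    rw [hBsplit, hbT]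
    have e1 : ∑ m ∈ Finset.Icc 1 B, c m ≤
        ∑ m ∈ Finset.Icc 1 B, ((1 - K ((m:ℝ)/B)) * |γ (m:ℤ)| + ((m:ℝ)/T) * |γ (m:ℤ)|) :=
      Finset.sum_le_sum hcB
    have e2 : ∑ m ∈ Finset.Icc (B+1) (T-1), c m =
        ∑ m ∈ Finset.Icc (B+1) (T-1), |γ (m:ℤ)| :=
      Finset.sum_congr rfl hcT
    rw [e2]
    have e3 : ∑ m ∈ Finset.Icc 1 B, ((1 - K ((m:ℝ)/B)) * |γ (m:ℤ)| + ((m:ℝ)/T) * |γ (m:ℤ)|)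
        = ∑ m ∈ Finset.Icc 1 B, (1 - K ((m:ℝ)/B)) * |γ (m:ℤ)|
          + (1/T) * ∑ m ∈ Finset.Icc 1 B, (m:ℝ) * |γ (m:ℤ)| := by
      rw [Finset.sum_add_distrib, Finset.mul_sum]
      congr 1
      apply Finset.sum_congr rfl
      intro m _
      ring
    rw [e3] at e1
    have e4 : (2:ℝ)/T * ∑ m ∈ Finset.Icc 1 B, (m:ℝ) * |γ (m:ℤ)| =
        2 * ((1/T) * ∑ m ∈ Finset.Icc 1 B, (m:ℝ) * |γ (m:ℤ)|) := by ring
    rw [e4]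
    linarith
  -- nonnegativity of bT
  have hbTnn : 0 ≤ bT := by
    have hc2 : (0:ℝ) ≤ 2 * ∑ m ∈ Finset.Icc 1 (T-1), c m :=
      mul_nonneg (by norm_num) (Finset.sum_nonneg fun m _ => hcnn m)
    exact le_trans hc2 hhalf
  -- conclude via Schur test
  apply schur M bT hbTnn
  · intro i
    calc ∑ j, |M i j| = ∑ j : Fin T, c (((i:ℤ) - (j:ℤ)).natAbs) :=
          Finset.sum_congr rfl fun j _ => habs i j
      _ ≤ 2 * ∑ m ∈ Finset.Icc 1 (T-1), c m := hrowc i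
      _ ≤ bT := hhalf
  · intro j
    calc ∑ i, |M i j| = ∑ i : Fin T, c (((j:ℤ) - (i:ℤ)).natAbs) := by
          apply Finset.sum_congr rfl
          intro i _
          rw [habs i j]
          congr 1
          omega
      _ ≤ 2 * ∑ m ∈ Finset.Icc 1 (T-1), c m := hrowc j
      _ ≤ bT := hhalf
end
end
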